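/- Let L : ℝ → ℝ be C² with L'' ≥ γ > 0, let H = L* be its Legendre transform, and define H⁻(p) = sup_{q ≤ 0}(pq − L(q)). Then H is C¹, convex, coercive, and H is non-increasing on (−∞, L'(0)] and non-decreasing on [L'(0), +∞); moreover H⁻(p) = H(min(p, L'(0))). (That is, assumption (A1) implies assumption (A1') with p₀ = L'(0).) -/

import Mathlib

open Filter

open Set in

private lemma growth_aux {f : ℝ → ℝ} {γ : ℝ} (hfd : Differentiable ℝ f)
    (h : ∀ x, γ ≤ deriv f x) {x y : ℝ} (hxy : x ≤ y) :
    f x + γ * (y - x) ≤ f y := by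
  rcases eq_or_lt_of_le hxy with rfl | h'
  · simp
  · obtain ⟨c, _, hc'⟩ := exists_deriv_eq_slope f h' hfd.continuous.continuousOn
      (fun z _ => (hfd z).differentiableWithinAt)
    have h0 : (0:ℝ) < y - x := by linarith
    have := h c
    rw [hc', le_div_iff₀ h0] at this
    linarith

private lemma grad_ineq {L : ℝ → ℝ} (hd : Differentiable ℝ L)
    (hmono : Monotone (deriv L)) (x y : ℝ) :
    L x + deriv L x * (y - x) ≤ L y := by
  rcases lt_trichotomy x y with h | h | h
  · obtain ⟨c, hc, hc'⟩ := exists_deriv_eq_slope L h hd.continuous.continuousOn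
      (fun z _ => (hd z).differentiableWithinAt)
    have h1 : deriv L x ≤ deriv L c := hmono hc.1.le
    have h0 : (0:ℝ) < y - x := by linarith
    rw [hc', le_div_iff₀ h0] at h1
    linarith
  · simp [h]
  · obtain ⟨c, hc, hc'⟩ := exists_deriv_eq_slope L h hd.continuous.continuousOn
      (fun z _ => (hd z).differentiableWithinAt)
    have h1 : deriv L c ≤ deriv L x := hmono hc.2.le
    have h0 : (0:ℝ) < x - y := by linarith
    rw [hc', div_le_iff₀ h0] at h1
    nlinarith

/-- Assumption (A1) implies assumption (A1'): if `L` is C² with `L'' ≥ γ > 0`,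
`H = L*` and `H⁻(p) = sup_{q ≤ 0}(pq − L q)`, then `H` is C¹, convex, coercive,
non-increasing on `(−∞, L'(0)]`, non-decreasing on `[L'(0), ∞)`, and
`H⁻(p) = H (min p (L'(0)))`. -/
theorem A1_implies_A1prime
    (L H Hm : ℝ → ℝ) (γ : ℝ) (hγ : 0 < γ) (hL : ContDiff ℝ 2 L)
    (hL'' : ∀ x : ℝ, γ ≤ iteratedDeriv 2 L x)
    (hH : ∀ p, H p = ⨆ q : ℝ, (p * q - L q))
    (hHm : ∀ p, Hm p = ⨆ q : {q : ℝ // q ≤ 0}, (p * q.1 - L q.1)) :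
    ContDiff ℝ 1 H ∧ ConvexOn ℝ Set.univ H ∧
    Tendsto H atTop atTop ∧ Tendsto H atBot atTop ∧
    AntitoneOn H (Set.Iic (deriv L 0)) ∧ MonotoneOn H (Set.Ici (deriv L 0)) ∧
    (∀ p : ℝ, Hm p = H (min p (deriv L 0))) := by
  have hLd : Differentiable ℝ L := hL.differentiable (by norm_num)
  set f : ℝ → ℝ := deriv L with hf_def
  have hCf : ContDiff ℝ 1 f := (contDiff_succ_iff_deriv.mp (show ContDiff ℝ (1+1) L from by norm_num; exact hL)).2.2
  have hfd : Differentiable ℝ f := hCf.differentiable one_ne_zero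
  have hfc : Continuous f := hCf.continuous
  have hderivf : ∀ x, γ ≤ deriv f x := by
    intro x
    have := hL'' x
    rwa [show (2:ℕ) = 1 + 1 from rfl, iteratedDeriv_succ, iteratedDeriv_one] at this
  have hfmono : StrictMono f := strictMono_of_deriv_pos (fun x => lt_of_lt_of_le hγ (hderivf x))
  -- surjectivity of f
  have htop : Tendsto f atTop atTop := by
    apply tendsto_atTop_mono' atTop (f₁ := fun x => f 0 + γ * x)
    · filter_upwards [eventually_ge_atTop (0:ℝ)] with x hx
      have := growth_aux hfd hderivf hx
      linarith
    · exact tendsto_atTop_add_const_left _ _ (tendsto_id.const_mul_atTop hγ)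
  have hbot : Tendsto f atBot atBot := by
    apply tendsto_atBot_mono' atBot (f₁ := fun x => f 0 + γ * x)
    · filter_upwards [eventually_le_atBot (0:ℝ)] with x hx
      have := growth_aux hfd hderivf hx
      linarith
    · exact tendsto_atBot_add_const_left _ _ (tendsto_id.const_mul_atBot hγ)
  have hsurj : Function.Surjective f := hfc.surjective htop hbot
  set e := StrictMono.orderIsoOfSurjective f hfmono hsurj with he_def
  set g : ℝ → ℝ := fun p => e.symm p with hg_def
  have hg_cont : Continuous g := (OrderIso.continuous e.symm)
  have hg_mono : Monotone g := e.symm.monotone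
  have he_coe : ∀ x, e x = f x := fun x =>
    congrFun (StrictMono.coe_orderIsoOfSurjective f hfmono hsurj) x
  have hfg : ∀ p, f (g p) = p := fun p => by
    rw [← he_coe]; exact e.apply_symm_apply p
  have hg0 : g (f 0) = 0 := StrictMono.orderIsoOfSurjective_symm_apply_self f hfmono hsurj 0
  -- gradient inequality
  have hgi : ∀ x y, L x + f x * (y - x) ≤ L y := grad_ineq hLd hfmono.monotone
  -- the sup is attained at g p
  have hmax : ∀ p q, p * q - L q ≤ p * g p - L (g p) := by
    intro p q
    have := hgi (g p) q
    rw [hfg p] at this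
    nlinarith
  have hHval : ∀ p, H p = p * g p - L (g p) := by
    intro p
    rw [hH p]
    refine le_antisymm (ciSup_le fun q => hmax p q) ?_
    exact le_ciSup ⟨p * g p - L (g p), by rintro y ⟨q, rfl⟩; exact hmax p q⟩ (g p)
  -- H has derivative g
  have hHderiv : ∀ p, HasDerivAt H (g p) p := by
    intro p
    rw [hasDerivAt_iff_tendsto_slope]
    have key : ∀ p' ∈ ({p}ᶜ : Set ℝ), ‖slope H p p' - g p‖ ≤ |g p' - g p| := by
      intro p' hne
      have hne' : p' ≠ p := hne
      have h1 : p' * g p - L (g p) ≤ H p' := by rw [hHval p']; exact hmax p' (g p)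
      have h2 : p * g p' - L (g p') ≤ H p := by rw [hHval p]; exact hmax p (g p')
      have hHp := hHval p
      have hHp' := hHval p'
      rw [slope_def_field, div_sub' (sub_ne_zero.mpr hne'), Real.norm_eq_abs, abs_div]
      rcases lt_or_gt_of_ne hne' with h | h
      · have hgm : g p' ≤ g p := hg_mono h.le
        have hA : 0 ≤ H p' - H p - (p' - p) * g p := by nlinarith
        rw [abs_of_neg (by linarith : p' - p < 0), abs_of_nonneg hA,
          abs_of_nonpos (by linarith : g p' - g p ≤ 0),
          div_le_iff₀ (by linarith : (0:ℝ) < -(p' - p))]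
        nlinarith
      · have hgm : g p ≤ g p' := hg_mono h.le
        have hA : 0 ≤ H p' - H p - (p' - p) * g p := by nlinarith
        rw [abs_of_pos (by linarith : 0 < p' - p), abs_of_nonneg hA,
          abs_of_nonneg (by linarith : 0 ≤ g p' - g p),
          div_le_iff₀ (by linarith : (0:ℝ) < p' - p)]
        nlinarith
    have hbound : Tendsto (fun p' => |g p' - g p|) (nhdsWithin p {p}ᶜ) (nhds 0) := by
      have h0 : Tendsto (fun p' => |g p' - g p|) (nhds p) (nhds |g p - g p|) :=
        (Continuous.abs (hg_cont.sub continuous_const)).tendsto p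
      simp only [sub_self, abs_zero] at h0
      exact h0.mono_left nhdsWithin_le_nhds
    have := squeeze_zero_norm' (eventually_nhdsWithin_of_forall key) hbound
    simpa [tendsto_sub_nhds_zero_iff] using this
  have hdiffH : Differentiable ℝ H := fun p => (hHderiv p).differentiableAt
  have hderivH : deriv H = g := funext fun p => (hHderiv p).deriv
  refine ⟨?_, ?_, ?_, ?_, ?_, ?_, ?_⟩
  · exact contDiff_one_iff_deriv.mpr ⟨hdiffH, hderivH ▸ hg_cont⟩
  · exact Monotone.convexOn_univ_of_deriv hdiffH (hderivH ▸ hg_mono)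
  · apply tendsto_atTop_mono' atTop (f₁ := fun p => p * 1 - L 1)
    · filter_upwards with p
      rw [hHval p]; exact hmax p 1
    · simpa [sub_eq_add_neg] using tendsto_atTop_add_const_right atTop (-L 1) tendsto_id
  · apply tendsto_atTop_mono' atBot (f₁ := fun p => p * (-1) - L (-1))
    · filter_upwards with p
      rw [hHval p]; exact hmax p (-1)
    · have : Tendsto (fun p : ℝ => -p) atBot atTop := tendsto_neg_atBot_atTop
      simpa [mul_comm, sub_eq_add_neg] using tendsto_atTop_add_const_right atBot (-L (-1)) this
  · apply antitoneOn_of_deriv_nonpos (convex_Iic _) hdiffH.continuous.continuousOn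
      hdiffH.differentiableOn
    intro x hx
    rw [interior_Iic] at hx
    rw [hderivH]
    have : g x ≤ g (f 0) := hg_mono (le_of_lt hx)
    rwa [hg0] at this
  · apply monotoneOn_of_deriv_nonneg (convex_Ici _) hdiffH.continuous.continuousOn
      hdiffH.differentiableOn
    intro x hx
    rw [interior_Ici] at hx
    rw [hderivH]
    have : g (f 0) ≤ g x := hg_mono (le_of_lt hx)
    rwa [hg0] at this
  · intro p
    haveI : Nonempty {q : ℝ // q ≤ 0} := ⟨⟨0, le_refl 0⟩⟩
    rcases le_or_gt p (f 0) with hple | hlt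
    · rw [min_eq_left hple, hHm p, hHval p]
      have hgp0 : g p ≤ 0 := by
        have := hg_mono hple
        rwa [hg0] at this
      refine le_antisymm (ciSup_le fun q => hmax p q.1) ?_
      exact le_ciSup (f := fun q : {q : ℝ // q ≤ 0} => p * q.1 - L q.1)
        ⟨p * g p - L (g p), by rintro y ⟨q, rfl⟩; exact hmax p q.1⟩ ⟨g p, hgp0⟩
    · rw [min_eq_right hlt.le, hHm p, hHval (f 0), hg0]
      have hub : ∀ q : {q : ℝ // q ≤ 0}, p * q.1 - L q.1 ≤ f 0 * 0 - L 0 := by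
        rintro ⟨q, hq⟩
        have h1 := hgi 0 q
        have h2 : p * q ≤ f 0 * q := by nlinarith
        simp only
        nlinarith
      refine le_antisymm (ciSup_le hub) ?_
      have := le_ciSup (f := fun q : {q : ℝ // q ≤ 0} => p * q.1 - L q.1)
        ⟨f 0 * 0 - L 0, by rintro y ⟨q, rfl⟩; exact hub q⟩ ⟨0, le_refl 0⟩
      simpa using this
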